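/- Let K ≥ 1 and δ ≥ 0 be real numbers, let r be a natural number with r·K·δ < 1, and let p₁, …, p_r be nonnegative reals with |p_i − 1/K| ≤ δ for each i. Then |∏_{i=1}^{r} p_i − (1/K)^r| ≤ (1/K)^r · (rKδ + (rKδ)²/(1 − rKδ)). -/

import Mathlib

/-- If each `p i` is within `δ` of `1/K` and `rKδ < 1`, then the product
`∏ p i` is within `(1/K)^r·(rKδ + (rKδ)²/(1 − rKδ))` of `(1/K)^r`. -/
theorem stmt_13 (K δ : ℝ) (hK : 1 ≤ K) (hδ : 0 ≤ δ)
    (r : ℕ) (hr : (r : ℝ) * K * δ < 1)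
    (p : Fin r → ℝ) (hp0 : ∀ i, 0 ≤ p i) (hp : ∀ i, |p i - 1 / K| ≤ δ) :
    |(∏ i, p i) - (1 / K) ^ r|
      ≤ (1 / K) ^ r * ((r : ℝ) * K * δ
          + ((r : ℝ) * K * δ) ^ 2 / (1 - (r : ℝ) * K * δ)) := by
  have hK0 : (0:ℝ) < K := lt_of_lt_of_le one_pos hK
  rcases Nat.eq_zero_or_pos r with hr0 | hr1
  · subst hr0
    simp only [Finset.univ_eq_empty, Finset.prod_empty, pow_zero, sub_self, abs_zero,
      Nat.cast_zero, zero_mul, one_mul]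
    norm_num
  set ε := K * δ with hεdef
  have hε0 : 0 ≤ ε := mul_nonneg hK0.le hδ
  have hrε : (r:ℝ) * ε < 1 := by rw [hεdef, ← mul_assoc]; exact hr
  have hr1' : (1:ℝ) ≤ r := by exact_mod_cast hr1
  have hε1 : ε < 1 := by nlinarith
  have h1 : 0 < 1 - (r:ℝ)*ε := by linarith
  have hδε : 1/K * ε = δ := by
    rw [hεdef]; field_simp
  have hub : ∀ i, p i ≤ 1/K * (1+ε) := by
    intro i
    have := (abs_le.1 (hp i)).2
    have : p i ≤ 1/K + δ := by linarith
    rw [mul_add, mul_one, hδε]; linarith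
  have hlb : ∀ i, 1/K * (1-ε) ≤ p i := by
    intro i
    have := (abs_le.1 (hp i)).1
    rw [mul_sub, mul_one, hδε]; linarith
  have hlbpos : (0:ℝ) ≤ 1/K * (1-ε) := by
    have : (0:ℝ) < 1/K := by positivity
    nlinarith
  have hcu : ∏ _i : Fin r, (1/K * (1+ε)) = (1/K * (1+ε))^r := by simp
  have hcl : ∏ _i : Fin r, (1/K * (1-ε)) = (1/K * (1-ε))^r := by simp
  have hprodub : (∏ i, p i) ≤ (1/K * (1+ε))^r := by
    rw [← hcu]
    exact Finset.prod_le_prod (fun i _ => hp0 i) (fun i _ => hub i)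
  have hprodlb : (1/K * (1-ε))^r ≤ ∏ i, p i := by
    rw [← hcl]
    exact Finset.prod_le_prod (fun i _ => hlbpos) (fun i _ => hlb i)
  -- Bernoulli-type bounds
  have hB : 1 - (r:ℝ)*ε ≤ (1-ε)^r := by
    have := one_add_mul_le_pow (a := -ε) (by linarith) r
    simp only [← sub_eq_add_neg] at this; linarith
  have hApos : (0:ℝ) ≤ (1+ε)^r := by positivity
  have hA : (1+ε)^r ≤ 1 / (1 - (r:ℝ)*ε) := by
    rw [le_div_iff₀ h1]
    have h2 : (1+ε)^r * (1-ε)^r = (1-ε^2)^r := by rw [← mul_pow]; ring_nf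
    have h3 : (1-ε^2)^r ≤ 1 := by
      apply pow_le_one₀ <;> nlinarith
    nlinarith [mul_le_mul_of_nonneg_left hB hApos]
  set P := (1/K)^r with hPdef
  have hP : (0:ℝ) < P := by positivity
  have hmul1 : (1/K * (1+ε))^r = P * (1+ε)^r := mul_pow _ _ _
  have hmul2 : (1/K * (1-ε))^r = P * (1-ε)^r := mul_pow _ _ _
  have hRHS : (r:ℝ) * K * δ + ((r:ℝ) * K * δ) ^ 2 / (1 - (r:ℝ) * K * δ)
      = 1/(1 - (r:ℝ)*ε) - 1 := by
    have hne : (1:ℝ) - (r:ℝ)*ε ≠ 0 := h1.ne'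
    rw [hεdef] at hne ⊢
    rw [mul_assoc]
    have hne2 : (1:ℝ) - r*K*δ ≠ 0 := by rw [mul_assoc]; exact hne
    field_simp
    ring
  rw [hRHS, abs_sub_le_iff]
  constructor
  · have h4 : (∏ i, p i) ≤ P * (1/(1 - (r:ℝ)*ε)) := by
      calc (∏ i, p i) ≤ P * (1+ε)^r := by rw [← hmul1]; exact hprodub
        _ ≤ P * (1/(1 - (r:ℝ)*ε)) := mul_le_mul_of_nonneg_left hA hP.le
    have := mul_sub P (1/(1 - (r:ℝ)*ε)) 1
    linarith
  · have h5 : P * (1 - (r:ℝ)*ε) ≤ ∏ i, p i := by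
      calc P * (1 - (r:ℝ)*ε) ≤ P * (1-ε)^r := mul_le_mul_of_nonneg_left hB hP.le
        _ = (1/K * (1-ε))^r := hmul2.symm
        _ ≤ ∏ i, p i := hprodlb
    have h6 : (r:ℝ)*ε ≤ 1/(1 - (r:ℝ)*ε) - 1 := by
      rw [le_sub_iff_add_le, ← sub_nonneg]
      have : 1/(1 - (r:ℝ)*ε) - ((r:ℝ)*ε + 1) = ((r:ℝ)*ε)^2 / (1 - (r:ℝ)*ε) := by
        field_simp; ring
      rw [this]; positivity
    have h7 := mul_le_mul_of_nonneg_left h6 hP.le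
    have h8 := mul_sub P (1 - (r:ℝ)*ε) 1
    nlinarith
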